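/- Let v₁, …, v_k ∈ ℝᵐ, let w ∈ ℝᵐ, and let u₁, …, u_k ∈ ℝᵐ satisfy ‖uᵢ − uⱼ‖ ≤ ‖vᵢ − vⱼ‖ for all i, j = 1, …, k. Then there exists p ∈ ℝᵐ such that ‖p − uᵢ‖ ≤ ‖w − vᵢ‖ for all i = 1, …, k and p − w lies in the convex hull of {u₁ − v₁, …, u_k − v_k}. -/

import Mathlib

open scoped InnerProductSpace
open Finset

lemma aux_weights {ι : Type*} [Fintype ι] [Nonempty ι] [DecidableEq ι]
    {E : Type*} [NormedAddCommGroup E] [InnerProductSpace ℝ E]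
    {C : Set E} (hC : Convex ℝ C) {x : E} (hxC : x ∈ C) (g : ι → E)
    (hmax : ∀ y ∈ C, ∃ i, 0 ≤ ⟪g i, y - x⟫_ℝ) :
    ∃ μ : ι → ℝ, (∀ i, 0 ≤ μ i) ∧ (∑ i, μ i = 1) ∧
      ∀ y ∈ C, 0 ≤ ∑ i, μ i * ⟪g i, y - x⟫_ℝ := by
  classical
  set s : Set (ι → ℝ) := {o | ∀ i, o i < 0} with hs_def
  set t : Set (ι → ℝ) := {d | ∃ y ∈ C, ∀ i, ⟪g i, y - x⟫_ℝ ≤ d i} with ht_def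
  have hs_open : IsOpen s := by
    have : s = ⋂ i, (fun o : ι → ℝ => o i) ⁻¹' Set.Iio 0 := by
      ext o; simp [hs_def, Set.mem_iInter]
    rw [this]
    exact isOpen_iInter_of_finite fun i =>
      (isOpen_Iio).preimage (continuous_apply i)
  have hs_conv : Convex ℝ s := by
    intro o ho o' ho' p q hp hq hpq
    intro i
    simp only [Pi.add_apply, Pi.smul_apply, smul_eq_mul]
    rcases eq_or_lt_of_le hp with h | h
    · have : q = 1 := by linarith
      rw [← h, this]; simpa using ho' i
    · nlinarith [ho i, ho' i, mul_nonpos_of_nonneg_of_nonpos hq (ho' i).le]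
  have ht_conv : Convex ℝ t := by
    rintro d ⟨y, hy, hd⟩ d' ⟨y', hy', hd'⟩ p q hp hq hpq
    refine ⟨p • y + q • y', hC hy hy' hp hq hpq, fun i => ?_⟩
    have key : ⟪g i, p • y + q • y' - x⟫_ℝ
        = p * ⟪g i, y - x⟫_ℝ + q * ⟪g i, y' - x⟫_ℝ := by
      simp only [inner_sub_right, inner_add_right, real_inner_smul_right]
      linear_combination (⟪g i, x⟫_ℝ) * hpq
    rw [key]
    simp only [Pi.add_apply, Pi.smul_apply, smul_eq_mul]
    exact add_le_add (mul_le_mul_of_nonneg_left (hd i) hp)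
      (mul_le_mul_of_nonneg_left (hd' i) hq)
  have hdisj : Disjoint s t := by
    rw [Set.disjoint_left]
    rintro o ho ⟨y, hy, hle⟩
    obtain ⟨i, hi⟩ := hmax y hy
    exact absurd (lt_of_le_of_lt (hi.trans (hle i)) (ho i)) (lt_irrefl _)
  obtain ⟨f, c, hfs, hft⟩ := geometric_hahn_banach_open hs_conv hs_open ht_conv hdisj
  set φ : ι → ℝ := fun i => f (fun j => if i = j then 1 else 0) with hφ_def
  have hrep : ∀ o : ι → ℝ, f o = ∑ i, o i * φ i := by
    intro o
    conv_lhs => rw [pi_eq_sum_univ o]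
    rw [map_sum]
    exact Finset.sum_congr rfl fun i _ => by rw [map_smul]; simp [hφ_def]
  have hmem_s : ∀ (o : ι → ℝ), (∀ i, o i < 0) → o ∈ s := fun o h => h
  have hφ0 : ∀ j, 0 ≤ φ j := by
    intro j
    by_contra hneg
    push_neg at hneg
    set T : ℝ := ∑ i, φ i with hT
    set M : ℝ := max 1 ((c + T - φ j + 1) / (-φ j)) with hM
    have hM1 : 1 ≤ M := le_max_left _ _
    have hM2 : (c + T - φ j + 1) / (-φ j) ≤ M := le_max_right _ _
    have hMφ : M * (-φ j) ≥ c + T - φ j + 1 := by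
      rw [ge_iff_le, ← div_le_iff₀ (by linarith : (0:ℝ) < -φ j)] at *
      linarith [hM2]
    set o : ι → ℝ := fun i => if i = j then -M else -1 with ho_def
    have hos : o ∈ s := hmem_s o fun i => by
      by_cases h : i = j <;> simp [ho_def, h] <;> linarith
    have hfo : f o = -M * φ j - (T - φ j) := by
      rw [hrep]
      have : ∀ i, o i * φ i = (-1) * φ i + (if i = j then (1 - M) * φ i else 0) := by
        intro i; by_cases h : i = j <;> simp [ho_def, h] <;> ring
      rw [Finset.sum_congr rfl fun i _ => this i, Finset.sum_add_distrib,
        Finset.sum_ite_eq' Finset.univ j (fun i => (1 - M) * φ i)]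
      simp [hT]
      ring
    have := hfs o hos
    rw [hfo] at this
    nlinarith
  have hT0 : 0 ≤ ∑ i, φ i := Finset.sum_nonneg fun i _ => hφ0 i
  have hc0 : 0 ≤ c := by
    by_contra hc
    push_neg at hc
    set T : ℝ := ∑ i, φ i with hT
    set ε : ℝ := (-c) / (T + 1) with hε
    have hε0 : 0 < ε := div_pos (by linarith) (by linarith)
    have hos : (fun _ : ι => -ε) ∈ s := hmem_s _ fun i => by simpa using hε0
    have := hfs _ hos
    rw [hrep] at this
    have heq : ∑ i, (-ε) * φ i = -ε * T := by rw [← Finset.mul_sum]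
    rw [heq] at this
    have h2 : -c < ε * T := by linarith
    have h3 : ε * T ≤ -c := by
      rw [hε, div_mul_eq_mul_div, div_le_iff₀ (by linarith : (0:ℝ) < T + 1)]
      nlinarith
    linarith
  have h0t : (fun _ : ι => (0:ℝ)) ∈ t := ⟨x, hxC, fun i => by simp⟩
  have hTpos : 0 < ∑ i, φ i := by
    rcases hT0.lt_or_eq with h | h
    · exact h
    · exfalso
      have hall : ∀ i ∈ Finset.univ, φ i = 0 :=
        (Finset.sum_eq_zero_iff_of_nonneg (fun i _ => hφ0 i)).1 h.symm
      have h1 : f (fun _ : ι => (-1:ℝ)) = 0 := by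
        rw [hrep]; exact Finset.sum_eq_zero fun i _ => by rw [hall i (Finset.mem_univ i)]; ring
      have h2 : f (fun _ : ι => (0:ℝ)) = 0 := by
        rw [hrep]; exact Finset.sum_eq_zero fun i _ => by ring
      have := hfs _ (hmem_s (fun _ => -1) fun i => by norm_num)
      have h3 := hft _ h0t
      rw [h1] at this; rw [h2] at h3
      linarith
  refine ⟨fun i => φ i / (∑ i, φ i), fun i => div_nonneg (hφ0 i) hT0, ?_, ?_⟩
  · rw [← Finset.sum_div, div_self (ne_of_gt hTpos)]
  · intro y hy
    have hdt : (fun i => ⟪g i, y - x⟫_ℝ) ∈ t := ⟨y, hy, fun i => le_rfl⟩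
    have := hft _ hdt
    rw [hrep] at this
    have hsum : 0 ≤ ∑ i, ⟪g i, y - x⟫_ℝ * φ i := le_trans hc0 this
    have heq : ∑ i, φ i / (∑ i, φ i) * ⟪g i, y - x⟫_ℝ
        = (∑ i, ⟪g i, y - x⟫_ℝ * φ i) / (∑ i, φ i) := by
      rw [Finset.sum_div]
      exact Finset.sum_congr rfl fun i _ => by ring
    rw [heq]
    exact div_nonneg hsum hT0

lemma aux_t_active {NN X D : ℝ} (hD : 0 ≤ D) (hX : X < 0) :
    ∃ t0 : ℝ, 0 < t0 ∧ t0 ≤ 1 ∧ ∀ t : ℝ, 0 < t → t ≤ t0 → NN + t * (2 * X + t * D) < NN := by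
  refine ⟨min 1 (-X / (D + 1)), lt_min one_pos (div_pos (by linarith) (by linarith)),
    min_le_left _ _, ?_⟩
  intro t ht htle
  have h2 : t ≤ -X / (D + 1) := le_trans htle (min_le_right _ _)
  have h3 : t * (D + 1) ≤ -X := by
    rw [← le_div_iff₀ (by linarith : (0:ℝ) < D + 1)]; exact h2
  nlinarith

lemma aux_t_inactive {A NN X D : ℝ} (hD : 0 ≤ D) (hA : A < NN) :
    ∃ t0 : ℝ, 0 < t0 ∧ t0 ≤ 1 ∧ ∀ t : ℝ, 0 < t → t ≤ t0 → A + t * (2 * X + t * D) < NN := by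
  refine ⟨min 1 ((NN - A) / (2 * |X| + D + 1)),
    lt_min one_pos (div_pos (by linarith) (by positivity)), min_le_left _ _, ?_⟩
  intro t ht htle
  have h1 : t ≤ 1 := le_trans htle (min_le_left _ _)
  have h2 : t ≤ (NN - A) / (2 * |X| + D + 1) := le_trans htle (min_le_right _ _)
  have h3 : t * (2 * |X| + D + 1) ≤ NN - A := by
    rw [← le_div_iff₀ (by positivity : (0:ℝ) < 2 * |X| + D + 1)]; exact h2
  have p1 : t * X ≤ t * |X| := mul_le_mul_of_nonneg_left (le_abs_self X) ht.le
  have p2 : t * (t * D) ≤ 1 * (t * D) :=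
    mul_le_mul_of_nonneg_right h1 (mul_nonneg ht.le hD)
  nlinarith [p1, p2]

set_option maxHeartbeats 2000000 in
theorem stmt_17 (m k : ℕ) (hk : 0 < k)
    (v : Fin k → EuclideanSpace ℝ (Fin m)) (w : EuclideanSpace ℝ (Fin m))
    (u : Fin k → EuclideanSpace ℝ (Fin m))
    (hmaj : ∀ i j, ‖u i - u j‖ ≤ ‖v i - v j‖) :
    ∃ p : EuclideanSpace ℝ (Fin m),
      (∀ i, ‖p - u i‖ ≤ ‖w - v i‖) ∧
      p - w ∈ convexHull ℝ (Set.range fun i => u i - v i) := by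
  classical
  haveI : Nonempty (Fin k) := ⟨⟨0, hk⟩⟩
  set a : Fin k → EuclideanSpace ℝ (Fin m) := fun i => u i - v i with ha_def
  set b : Fin k → EuclideanSpace ℝ (Fin m) := fun i => w - v i with hb_def
  set c : Fin k → EuclideanSpace ℝ (Fin m) := fun i => u i - w with hc_def
  set C : Set (EuclideanSpace ℝ (Fin m)) := convexHull ℝ (Set.range a) with hC_def
  have hCcvx : Convex ℝ C := convex_convexHull ℝ _
  have hCcomp : IsCompact C := (Set.finite_range a).isCompact_convexHull ℝ
  have hCne : C.Nonempty := ⟨a ⟨0, hk⟩, subset_convexHull ℝ _ ⟨⟨0, hk⟩, rfl⟩⟩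
  set h : Fin k → EuclideanSpace ℝ (Fin m) → ℝ := fun i x => ‖x - c i‖ ^ 2 - ‖b i‖ ^ 2
    with hh_def
  have hhcont : ∀ i, Continuous (h i) := fun i =>
    ((continuous_id.sub continuous_const).norm.pow 2).sub continuous_const
  set N : EuclideanSpace ℝ (Fin m) → ℝ :=
    fun x => Finset.univ.sup' Finset.univ_nonempty (fun i => h i x) with hN_def
  have hNcont : Continuous N :=
    Continuous.finset_sup'_apply Finset.univ_nonempty fun i _ => hhcont i
  obtain ⟨x₀, hx₀C, hx₀min⟩ := hCcomp.exists_isMinOn hCne hNcont.continuousOn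
  have hle : ∀ i x, h i x ≤ N x := fun i x => Finset.le_sup' (fun i => h i x) (Finset.mem_univ i)
  have hexp : ∀ (i) (t : ℝ) (d : EuclideanSpace ℝ (Fin m)),
      h i (x₀ + t • d) = h i x₀ + t * (2 * ⟪x₀ - c i, d⟫_ℝ + t * ‖d‖ ^ 2) := by
    intro i t d
    have h1 : x₀ + t • d - c i = x₀ - c i + t • d := by abel
    simp only [hh_def]
    rw [h1, norm_add_sq_real, real_inner_smul_right, norm_smul]
    simp only [Real.norm_eq_abs, mul_pow, sq_abs]
    ring
  have key : ∀ y ∈ C, ∃ i, h i x₀ = N x₀ ∧ 0 ≤ ⟪x₀ - c i, y - x₀⟫_ℝ := by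
    intro y hy
    by_contra hcon
    push_neg at hcon
    set d := y - x₀ with hd_def
    have hti : ∀ i, ∃ ti : ℝ, 0 < ti ∧ ti ≤ 1 ∧
        ∀ t : ℝ, 0 < t → t ≤ ti → h i (x₀ + t • d) < N x₀ := by
      intro i
      by_cases hact : h i x₀ = N x₀
      · have hneg := hcon i hact
        obtain ⟨t0, ht0, ht1, hP⟩ :=
          aux_t_active (NN := N x₀) (sq_nonneg ‖d‖) hneg
        exact ⟨t0, ht0, ht1, fun t ht htle => by
          rw [hexp i t d, hact]; exact hP t ht htle⟩
      · have hlt' : h i x₀ < N x₀ := lt_of_le_of_ne (hle i x₀) hact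
        obtain ⟨t0, ht0, ht1, hP⟩ :=
          aux_t_inactive (X := ⟪x₀ - c i, d⟫_ℝ) (sq_nonneg ‖d‖) hlt'
        exact ⟨t0, ht0, ht1, fun t ht htle => by
          rw [hexp i t d]; exact hP t ht htle⟩
    choose ti hti0 hti1 htiP using hti
    set t := Finset.univ.inf' Finset.univ_nonempty ti with ht_def
    have ht0 : 0 < t := (Finset.lt_inf'_iff _).2 fun i _ => hti0 i
    have ht1 : t ≤ 1 := le_trans (Finset.inf'_le _ (Finset.mem_univ ⟨0, hk⟩)) (hti1 ⟨0, hk⟩)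
    have hmem : x₀ + t • d ∈ C := by
      have heq : x₀ + t • d = (1 - t) • x₀ + t • y := by
        rw [sub_smul, one_smul, hd_def, smul_sub]; abel
      rw [heq]
      exact hCcvx hx₀C hy (by linarith) ht0.le (by ring)
    have h1 := (isMinOn_iff.mp hx₀min) _ hmem
    have h2 : N (x₀ + t • d) < N x₀ :=
      (Finset.sup'_lt_iff _).2 fun i _ => htiP i t ht0 (Finset.inf'_le _ (Finset.mem_univ i))
    linarith
  set ι := {i : Fin k // h i x₀ = N x₀} with hι_def
  haveI : Nonempty ι := by
    obtain ⟨i, _, hi⟩ := Finset.exists_mem_eq_sup' Finset.univ_nonempty (fun i => h i x₀)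
    exact ⟨⟨i, hi.symm⟩⟩
  obtain ⟨μ, hμ0, hμ1, hμ⟩ := aux_weights hCcvx hx₀C (fun i : ι => x₀ - c i.1)
    (fun y hy => by obtain ⟨i, hi1, hi2⟩ := key y hy; exact ⟨⟨i, hi1⟩, hi2⟩)
  set x₁ : EuclideanSpace ℝ (Fin m) := ∑ i : ι, μ i • a i.1 with hx₁_def
  have hx₁C : x₁ ∈ C :=
    hCcvx.sum_mem (fun i _ => hμ0 i) hμ1 fun i _ => subset_convexHull ℝ _ ⟨i.1, rfl⟩
  have hpair : ∀ i j : Fin k, ‖a i - a j‖ ^ 2 ≤ 2 * ⟪a i - a j, b i - b j⟫_ℝ := by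
    intro i j
    have h0 : ‖u i - u j‖ ^ 2 ≤ ‖v i - v j‖ ^ 2 := by
      have := hmaj i j
      nlinarith [norm_nonneg (u i - u j), norm_nonneg (v i - v j)]
    have h1 : u i - u j = a i - a j + (v i - v j) := by simp only [ha_def]; abel
    rw [h1, norm_add_sq_real] at h0
    have h2 : v i - v j = b j - b i := by simp only [hb_def]; abel
    rw [h2] at h0
    have h3 : ⟪a i - a j, b j - b i⟫_ℝ = - ⟪a i - a j, b i - b j⟫_ℝ := by
      rw [← inner_neg_right]; congr 1; abel
    rw [h3] at h0
    linarith
  have hch : ∀ i, c i = a i - b i := by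
    intro i; simp only [ha_def, hb_def, hc_def]; abel
  have halt : ∀ i x, h i x = ‖x - a i‖ ^ 2 + 2 * ⟪x - a i, b i⟫_ℝ := by
    intro i x
    have e : x - c i = x - a i + b i := by rw [hch i]; abel
    simp only [hh_def]
    rw [e, norm_add_sq_real]; ring
  set F : ι → ι → ℝ :=
    fun i j => ⟪x₁ - a i.1, a j.1 - a i.1⟫_ℝ + 2 * ⟪a j.1 - a i.1, b i.1⟫_ℝ with hF_def
  have hsumd : ∀ i : ι, ∑ j : ι, μ j • (a j.1 - a i.1) = x₁ - a i.1 := by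
    intro i
    simp only [smul_sub]
    rw [Finset.sum_sub_distrib, ← Finset.sum_smul, hμ1, one_smul, hx₁_def]
  have hrow : ∀ i : ι, ∑ j : ι, μ j * F i j = h i.1 x₁ := by
    intro i
    have e1 : ∑ j : ι, μ j * F i j
        = ⟪x₁ - a i.1, ∑ j : ι, μ j • (a j.1 - a i.1)⟫_ℝ
          + 2 * ⟪∑ j : ι, μ j • (a j.1 - a i.1), b i.1⟫_ℝ := by
      rw [inner_sum, sum_inner, Finset.mul_sum, ← Finset.sum_add_distrib]
      refine Finset.sum_congr rfl fun j _ => ?_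
      simp only [hF_def, real_inner_smul_right, real_inner_smul_left]
      ring
    rw [e1, hsumd i, halt, real_inner_self_eq_norm_sq]
  have hdiag : ∀ i j : ι, F i j + F j i ≤ 0 := by
    intro i j
    have hp := hpair i.1 j.1
    have e : F i j + F j i
        = ‖a i.1 - a j.1‖ ^ 2 - 2 * ⟪a i.1 - a j.1, b i.1 - b j.1⟫_ℝ := by
      simp only [hF_def, inner_sub_left, inner_sub_right]
      rw [norm_sub_sq_real, real_inner_comm (a j.1) (a i.1),
        real_inner_self_eq_norm_sq, real_inner_self_eq_norm_sq]
      ring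
    linarith
  have hminty : ∑ i : ι, μ i * h i.1 x₁ ≤ 0 := by
    have hL : ∑ i : ι, μ i * h i.1 x₁ = ∑ i : ι, ∑ j : ι, μ i * μ j * F i j := by
      refine Finset.sum_congr rfl fun i _ => ?_
      rw [← hrow i, Finset.mul_sum]
      exact Finset.sum_congr rfl fun j _ => by ring
    have hswap : ∑ i : ι, ∑ j : ι, μ i * μ j * F i j
        = ∑ i : ι, ∑ j : ι, μ i * μ j * F j i := by
      rw [Finset.sum_comm]
      exact Finset.sum_congr rfl fun i _ => Finset.sum_congr rfl fun j _ => by ring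
    have h2 : (2:ℝ) * ∑ i : ι, μ i * h i.1 x₁
        = ∑ i : ι, ∑ j : ι, μ i * μ j * (F i j + F j i) := by
      calc (2:ℝ) * ∑ i : ι, μ i * h i.1 x₁
          = (∑ i : ι, ∑ j : ι, μ i * μ j * F i j)
            + ∑ i : ι, ∑ j : ι, μ i * μ j * F j i := by
            rw [two_mul, hL]; nth_rewrite 2 [hswap]; rfl
        _ = ∑ i : ι, ∑ j : ι, (μ i * μ j * F i j + μ i * μ j * F j i) := by
            rw [← Finset.sum_add_distrib]
            exact Finset.sum_congr rfl fun i _ => by rw [← Finset.sum_add_distrib]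
        _ = ∑ i : ι, ∑ j : ι, μ i * μ j * (F i j + F j i) :=
            Finset.sum_congr rfl fun i _ => Finset.sum_congr rfl fun j _ => by ring
    have h3 : ∑ i : ι, ∑ j : ι, μ i * μ j * (F i j + F j i) ≤ 0 :=
      Finset.sum_nonpos fun i _ => Finset.sum_nonpos fun j _ =>
        mul_nonpos_of_nonneg_of_nonpos (mul_nonneg (hμ0 i) (hμ0 j)) (hdiag i j)
    linarith
  set Δ := x₀ - x₁ with hΔ_def
  have hEx : ∀ i : ι, h i.1 x₀ = h i.1 x₁ + 2 * ⟪x₁ - c i.1, Δ⟫_ℝ + ‖Δ‖ ^ 2 := by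
    intro i
    have e : x₀ - c i.1 = x₁ - c i.1 + Δ := by rw [hΔ_def]; abel
    simp only [hh_def]
    rw [e, norm_add_sq_real]; ring
  have hNsum : N x₀ = ∑ i : ι, μ i * h i.1 x₀ := by
    calc N x₀ = (∑ i : ι, μ i) * N x₀ := by rw [hμ1, one_mul]
      _ = ∑ i : ι, μ i * N x₀ := by rw [Finset.sum_mul]
      _ = ∑ i : ι, μ i * h i.1 x₀ := Finset.sum_congr rfl fun i _ => by rw [i.2]
  have hsplit : ∀ i : ι, ⟪x₁ - c i.1, Δ⟫_ℝ = ⟪x₀ - c i.1, Δ⟫_ℝ - ‖Δ‖ ^ 2 := by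
    intro i
    have e : x₁ - c i.1 = x₀ - c i.1 - Δ := by rw [hΔ_def]; abel
    rw [e, inner_sub_left, real_inner_self_eq_norm_sq]
  have hG : ∑ i : ι, μ i * ⟪x₀ - c i.1, Δ⟫_ℝ ≤ 0 := by
    have h1 := hμ x₁ hx₁C
    have e : ∀ i : ι, ⟪x₀ - c i.1, x₁ - x₀⟫_ℝ = - ⟪x₀ - c i.1, Δ⟫_ℝ := by
      intro i; rw [hΔ_def, ← inner_neg_right]; congr 1; abel
    have h2 : ∑ i : ι, μ i * ⟪x₀ - c i.1, x₁ - x₀⟫_ℝ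
        = - ∑ i : ι, μ i * ⟪x₀ - c i.1, Δ⟫_ℝ := by
      calc ∑ i : ι, μ i * ⟪x₀ - c i.1, x₁ - x₀⟫_ℝ
          = ∑ i : ι, -(μ i * ⟪x₀ - c i.1, Δ⟫_ℝ) :=
            Finset.sum_congr rfl fun i _ => by rw [e i]; ring
        _ = - ∑ i : ι, μ i * ⟪x₀ - c i.1, Δ⟫_ℝ := Finset.sum_neg_distrib _
    rw [h2] at h1
    linarith
  have hfinal : N x₀ ≤ 0 := by
    have e1 : ∑ i : ι, μ i * h i.1 x₀
        = (∑ i : ι, μ i * h i.1 x₁) + 2 * (∑ i : ι, μ i * ⟪x₁ - c i.1, Δ⟫_ℝ) + ‖Δ‖ ^ 2 := by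
      calc ∑ i : ι, μ i * h i.1 x₀
          = ∑ i : ι, (μ i * h i.1 x₁ + 2 * (μ i * ⟪x₁ - c i.1, Δ⟫_ℝ) + μ i * ‖Δ‖ ^ 2) :=
            Finset.sum_congr rfl fun i _ => by rw [hEx i]; ring
        _ = _ := by
            rw [Finset.sum_add_distrib, Finset.sum_add_distrib, ← Finset.mul_sum,
              ← Finset.sum_mul, hμ1, one_mul]
    have e2 : ∑ i : ι, μ i * ⟪x₁ - c i.1, Δ⟫_ℝ
        = (∑ i : ι, μ i * ⟪x₀ - c i.1, Δ⟫_ℝ) - ‖Δ‖ ^ 2 := by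
      calc ∑ i : ι, μ i * ⟪x₁ - c i.1, Δ⟫_ℝ
          = ∑ i : ι, (μ i * ⟪x₀ - c i.1, Δ⟫_ℝ - μ i * ‖Δ‖ ^ 2) :=
            Finset.sum_congr rfl fun i _ => by rw [hsplit i]; ring
        _ = _ := by rw [Finset.sum_sub_distrib, ← Finset.sum_mul, hμ1, one_mul]
    rw [hNsum, e1, e2]
    nlinarith [sq_nonneg ‖Δ‖, hminty, hG]
  refine ⟨w + x₀, fun i => ?_, ?_⟩
  · have h1 : h i x₀ ≤ 0 := le_trans (hle i x₀) hfinal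
    have h2 : w + x₀ - u i = x₀ - c i := by simp only [hc_def]; abel
    rw [h2]
    have h3 : ‖x₀ - c i‖ ^ 2 - ‖w - v i‖ ^ 2 ≤ 0 := by simpa [hh_def, hb_def] using h1
    nlinarith [norm_nonneg (x₀ - c i), norm_nonneg (w - v i)]
  · have h2 : w + x₀ - w = x₀ := by abel
    rw [h2]
    exact hx₀C
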